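/- arXiv:1405.0825 — 7 statements merged into one kernel-verified Lean document; each statement's English description precedes it below -/
import Mathlib

section
/- Every weighted majority game admits a normalized representation in which every dummy voter has weight zero. -/
open Finset

/-- A simple game on `n` voters: monotone, with `∅` losing and the grand coalition winning. -/
def IsSimpleGame {n : ℕ} (v : Finset (Fin n) → Bool) : Prop :=
  v ∅ = false ∧ v Finset.univ = true ∧
    ∀ S T : Finset (Fin n), S ⊆ T → v S = true → v T = true

/-- `(q, w)` is a representation of `v`: `q > 0`, nonnegative weights, and a coalition is
winning iff its total weight is at least `q` (hence losing iff strictly below `q`). -/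
def IsRep {n : ℕ} (v : Finset (Fin n) → Bool) (q : ℝ) (w : Fin n → ℝ) : Prop :=
  0 < q ∧ (∀ i, 0 ≤ w i) ∧ ∀ S : Finset (Fin n), v S = true ↔ q ≤ ∑ i ∈ S, w i

/-- A weighted majority game is a simple game admitting a representation. -/
def IsWMG {n : ℕ} (v : Finset (Fin n) → Bool) : Prop :=
  IsSimpleGame v ∧ ∃ (q : ℝ) (w : Fin n → ℝ), IsRep v q w

/-- Voter `i` is a dummy: adding `i` never changes the outcome. -/
def IsDummy {n : ℕ} (v : Finset (Fin n) → Bool) (i : Fin n) : Prop :=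
  ∀ S : Finset (Fin n), i ∉ S → v (insert i S) = v S

open Classical in
private lemma strip_dummies {n : ℕ} (v : Finset (Fin n) → Bool) :
    ∀ S : Finset (Fin n),
      v S = v (S.filter (fun i => ¬ IsDummy v i)) := by
  classical
  intro S
  induction S using Finset.strongInductionOn with
  | _ S ih =>
    by_cases h : ∃ i ∈ S, IsDummy v i
    · obtain ⟨i, hiS, hid⟩ := h
      have h1 : v S = v (S.erase i) := by
        have := hid (S.erase i) (Finset.notMem_erase i S)
        rwa [Finset.insert_erase hiS] at this
      have h2 : (S.erase i).filter (fun j => ¬ IsDummy v j)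
          = S.filter (fun j => ¬ IsDummy v j) := by
        rw [Finset.filter_erase]
        apply Finset.erase_eq_of_notMem
        simp [hid]
      rw [h1, ih (S.erase i) (Finset.erase_ssubset hiS), h2]
    · have : S.filter (fun i => ¬ IsDummy v i) = S := by
        apply Finset.filter_true_of_mem
        intro i hi hd
        exact h ⟨i, hi, hd⟩
      rw [this]

/-- Every weighted majority game admits a normalized representation in which
every dummy voter has weight zero. -/
theorem exists_normalized_dummy_revealing_representation (n : ℕ)
    (v : Finset (Fin n) → Bool) (hv : IsWMG v) :
    ∃ (q : ℝ) (w : Fin n → ℝ), IsRep v q w ∧ (∑ i, w i) = 1 ∧ q ≤ 1 ∧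
      ∀ i : Fin n, IsDummy v i → w i = 0 := by
  classical
  obtain ⟨⟨h0, h1, hmono⟩, q, w, hq, hw, hrep⟩ := hv
  -- zero out dummies
  set w' : Fin n → ℝ := fun i => if IsDummy v i then 0 else w i with hw'def
  have hw'nn : ∀ i, 0 ≤ w' i := by
    intro i; simp only [hw'def]; split <;> [rfl; exact hw i]
  have hsum : ∀ S : Finset (Fin n),
      ∑ i ∈ S, w' i = ∑ i ∈ S.filter (fun i => ¬ IsDummy v i), w i := by
    intro S
    rw [Finset.sum_filter]
    apply Finset.sum_congr rfl
    intro i _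
    simp only [hw'def]
    by_cases h : IsDummy v i <;> simp [h]
  have hrep' : ∀ S : Finset (Fin n), v S = true ↔ q ≤ ∑ i ∈ S, w' i := by
    intro S
    rw [hsum, strip_dummies v S]
    exact hrep _
  -- normalization
  have hW : q ≤ ∑ i, w' i := (hrep' Finset.univ).mp h1
  have hWpos : 0 < ∑ i, w' i := lt_of_lt_of_le hq hW
  refine ⟨q / (∑ i, w' i), fun i => w' i / (∑ i, w' i), ⟨?_, ?_, ?_⟩, ?_, ?_, ?_⟩
  · exact div_pos hq hWpos
  · intro i; exact div_nonneg (hw'nn i) hWpos.le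
  · intro S
    rw [hrep' S, ← Finset.sum_div, div_le_div_iff_of_pos_right hWpos]
  · rw [← Finset.sum_div, div_self hWpos.ne']
  · rw [div_le_one hWpos]; exact hW
  · intro i hi
    simp [hw'def, hi]
end

section
/- Every weighted majority game admits a representation (q, w_1, ..., w_n) in which q and all w_i are positive integers. -/
open Finset

set_option maxHeartbeats 1000000 in
/-- Every weighted majority game admits a representation in which the quota and all
weights are positive integers. -/
theorem exists_positive_integer_representation (n : ℕ) (v : Finset (Fin n) → Bool)
    (hv : IsWMG v) :
    ∃ (q : ℕ) (w : Fin n → ℕ), 0 < q ∧ (∀ i, 0 < w i) ∧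
      ∀ S : Finset (Fin n), v S = true ↔ q ≤ ∑ i ∈ S, w i := by
  obtain ⟨⟨hempty, huniv, hmono⟩, q, w, hq, hw, hrep⟩ := hv
  -- the set of losing coalitions
  set F : Finset (Finset (Fin n)) := Finset.univ.filter (fun S => v S = false) with hF
  have hne : F.Nonempty := ⟨∅, by simp [hF, hempty]⟩
  set b : ℝ := F.sup' hne (fun S => ∑ i ∈ S, w i) with hb
  have hlose : ∀ S : Finset (Fin n), v S = false → ∑ i ∈ S, w i < q := by
    intro S hS
    by_contra h
    have := (hrep S).mpr (le_of_not_gt h)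
    simp [this] at hS
  have hblt : b < q := by
    obtain ⟨S, hS, hSe⟩ := Finset.exists_mem_eq_sup' hne (fun S => ∑ i ∈ S, w i)
    rw [hb, hSe]
    exact hlose S (by simpa [hF] using hS)
  have hbge : ∀ S : Finset (Fin n), v S = false → ∑ i ∈ S, w i ≤ b := by
    intro S hS
    exact Finset.le_sup' (f := fun S => ∑ i ∈ S, w i) (by simp [hF, hS] : S ∈ F)
  set ε : ℝ := q - b with hε
  have hεpos : 0 < ε := by simp [hε]; linarith
  set δ : ℝ := ε / (2 * (n + 1)) with hδ
  have hδpos : 0 < δ := by positivity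
  -- perturbed weights w i + δ
  have hgap : ∀ S : Finset (Fin n), v S = false →
      ∑ i ∈ S, (w i + δ) ≤ q - ε / 2 := by
    intro S hS
    have h1 : ∑ i ∈ S, (w i + δ) = (∑ i ∈ S, w i) + S.card * δ := by
      rw [Finset.sum_add_distrib, Finset.sum_const, nsmul_eq_mul]
    have h2 : (S.card : ℝ) ≤ n := by
      exact_mod_cast (le_trans (Finset.card_le_card (Finset.subset_univ S))
        (by simp : (Finset.univ : Finset (Fin n)).card ≤ n))
    have h3 : (S.card : ℝ) * δ ≤ ε / 2 := by
      have : (S.card : ℝ) * δ ≤ (n : ℝ) * δ := by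
        apply mul_le_mul_of_nonneg_right h2 hδpos.le
      refine this.trans ?_
      rw [hδ, mul_div_assoc', div_le_div_iff₀ (by positivity) (by norm_num : (0:ℝ) < 2)]
      nlinarith [hεpos.le]
    have h4 := hbge S hS
    rw [h1]; linarith
  have hwin : ∀ S : Finset (Fin n), v S = true →
      q ≤ ∑ i ∈ S, (w i + δ) := by
    intro S hS
    have h1 := (hrep S).mp hS
    have h2 : ∑ i ∈ S, w i ≤ ∑ i ∈ S, (w i + δ) :=
      Finset.sum_le_sum (fun i _ => by linarith)
    linarith
  -- choose a large integer scale M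
  obtain ⟨M, hM⟩ := exists_nat_gt ((n : ℝ) / (ε / 2))
  have hMpos : (0 : ℝ) < M := lt_of_le_of_lt (by positivity) hM
  have hMn : (n : ℝ) < M * (ε / 2) := by
    rw [div_lt_iff₀ (by positivity)] at hM
    linarith
  refine ⟨⌈(M : ℝ) * q⌉₊, fun i => ⌈(M : ℝ) * (w i + δ)⌉₊, ?_, ?_, ?_⟩
  · exact Nat.ceil_pos.mpr (by positivity)
  · intro i
    have : (0 : ℝ) < (M : ℝ) * (w i + δ) := by
      have := hw i; positivity
    exact Nat.ceil_pos.mpr this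
  · intro S
    cases hvS : v S with
    | true =>
      simp only [true_iff]
      rw [Nat.ceil_le]
      push_cast
      calc (M : ℝ) * q ≤ (M : ℝ) * ∑ i ∈ S, (w i + δ) := by
            apply mul_le_mul_of_nonneg_left (hwin S hvS) hMpos.le
        _ = ∑ i ∈ S, (M : ℝ) * (w i + δ) := by rw [Finset.mul_sum]
        _ ≤ ∑ i ∈ S, (⌈(M : ℝ) * (w i + δ)⌉₊ : ℝ) :=
            Finset.sum_le_sum (fun i _ => Nat.le_ceil _)
    | false =>
      have hlt : (↑(∑ i ∈ S, ⌈(M : ℝ) * (w i + δ)⌉₊) : ℝ) < ⌈(M : ℝ) * q⌉₊ := by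
        push_cast
        have h2 : (S.card : ℝ) ≤ n := by
          exact_mod_cast (le_trans (Finset.card_le_card (Finset.subset_univ S))
            (by simp : (Finset.univ : Finset (Fin n)).card ≤ n))
        calc ∑ i ∈ S, (⌈(M : ℝ) * (w i + δ)⌉₊ : ℝ)
            ≤ ∑ i ∈ S, ((M : ℝ) * (w i + δ) + 1) := by
              refine Finset.sum_le_sum (fun i _ => ?_)
              have hnn : (0 : ℝ) ≤ (M : ℝ) * (w i + δ) := by
                have := hw i; positivity
              exact (Nat.ceil_lt_add_one hnn).le
          _ = (M : ℝ) * (∑ i ∈ S, (w i + δ)) + S.card := by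
              rw [Finset.sum_add_distrib, Finset.sum_const, nsmul_eq_mul, mul_one,
                Finset.mul_sum]
          _ ≤ (M : ℝ) * (q - ε / 2) + n := by
              have := hgap S hvS
              have := mul_le_mul_of_nonneg_left (hgap S hvS) hMpos.le
              linarith
          _ < (M : ℝ) * q := by nlinarith
          _ ≤ (⌈(M : ℝ) * q⌉₊ : ℝ) := Nat.le_ceil _
      have hlt' : ∑ i ∈ S, ⌈(M : ℝ) * (w i + δ)⌉₊ < ⌈(M : ℝ) * q⌉₊ := by
        exact_mod_cast hlt
      simp [not_le.mpr hlt']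
end

section
/- For every weighted majority game v there exist positive reals q̃, w̃_1, ..., w̃_{n−1} and α > 0 such that for all δ_0, ..., δ_{n−1} ∈ [−α, α], the tuple (q̃+δ_0, w̃_1+δ_1, ..., w̃_{n−1}+δ_{n−1}, 1 − Σ_{i=1}^{n−1}(w̃_i+δ_i)) is a normalized representation of v. In particular, the set of normalized representations of v has nonempty interior after eliminating the last weight coordinate. -/
open Finset

/-- Lemma 4 (full dimensionality): for every weighted majority game on `n+1` voters there
are positive reals `q̃, w̃_1, …, w̃_n` and `α > 0` such that every perturbation of the quota
and of the first `n` weights by at most `α` (the last weight taking up the slack so that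
the weights sum to one) yields a normalized representation of the game. -/
theorem exists_interior_normalized_representation (n : ℕ)
    (v : Finset (Fin (n + 1)) → Bool) (hv : IsWMG v) :
    ∃ (q : ℝ) (tw : Fin n → ℝ) (α : ℝ), 0 < q ∧ (∀ i, 0 < tw i) ∧ 0 < α ∧
      ∀ (δ₀ : ℝ) (δ : Fin n → ℝ), |δ₀| ≤ α → (∀ i, |δ i| ≤ α) →
        IsRep v (q + δ₀)
            (fun j : Fin (n + 1) =>
              if h : (j : ℕ) < n then tw ⟨j, h⟩ + δ ⟨j, h⟩
              else 1 - ∑ i, (tw i + δ i)) ∧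
          (∑ j : Fin (n + 1),
              (if h : (j : ℕ) < n then tw ⟨j, h⟩ + δ ⟨j, h⟩
               else 1 - ∑ i, (tw i + δ i))) = 1 ∧
          q + δ₀ ≤ 1 := by
  classical
  obtain ⟨⟨hempty, hfull, -⟩, q, w, hq, hw, hrep⟩ := hv
  have hlose_lt : ∀ S : Finset (Fin (n+1)), v S = false → ∑ i ∈ S, w i < q := by
    intro S hS
    by_contra h
    have h2 := (hrep S).mpr (le_of_not_gt h)
    simp [h2] at hS
  have hwin_ge : ∀ S : Finset (Fin (n+1)), v S = true → q ≤ ∑ i ∈ S, w i :=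
    fun S hS => (hrep S).mp hS
  set Lose : Finset (Finset (Fin (n+1))) := univ.filter (fun S => v S = false) with hLoseDef
  set Win : Finset (Finset (Fin (n+1))) := univ.filter (fun S => v S = true) with hWinDef
  have hmemL : ∀ S : Finset (Fin (n+1)), v S = false → S ∈ Lose :=
    fun S h => Finset.mem_filter.mpr ⟨Finset.mem_univ S, h⟩
  have hmemW : ∀ S : Finset (Fin (n+1)), v S = true → S ∈ Win :=
    fun S h => Finset.mem_filter.mpr ⟨Finset.mem_univ S, h⟩
  have hmemL' : ∀ S, S ∈ Lose → v S = false := fun S h => (Finset.mem_filter.mp h).2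
  have hmemW' : ∀ S, S ∈ Win → v S = true := fun S h => (Finset.mem_filter.mp h).2
  have hLne : Lose.Nonempty := ⟨∅, hmemL ∅ hempty⟩
  have hWne : Win.Nonempty := ⟨univ, hmemW univ hfull⟩
  set L : ℝ := Lose.sup' hLne (fun S => ∑ i ∈ S, w i) with hLdef
  set W : ℝ := Win.inf' hWne (fun S => ∑ i ∈ S, w i) with hWdef
  have hLle : ∀ S, v S = false → ∑ i ∈ S, w i ≤ L :=
    fun S h => Finset.le_sup' (fun S => ∑ i ∈ S, w i) (hmemL S h)
  have hWle : ∀ S, v S = true → W ≤ ∑ i ∈ S, w i :=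
    fun S h => Finset.inf'_le (fun S => ∑ i ∈ S, w i) (hmemW S h)
  have hLq : L < q := by
    rw [hLdef, Finset.sup'_lt_iff]
    intro S hS
    exact hlose_lt S (hmemL' S hS)
  have hqW : q ≤ W := by
    rw [hWdef, Finset.le_inf'_iff]
    intro S hS
    exact hwin_ge S (hmemW' S hS)
  have hL0 : 0 ≤ L := by
    have h0 := hLle ∅ hempty
    simpa using h0
  have hLW : L < W := lt_of_lt_of_le hLq hqW
  clear_value L W
  clear hLdef hWdef hmemL hmemW hmemL' hmemW' hLne hWne hLoseDef hWinDef Lose Win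
  have hnpos : (0:ℝ) < (n:ℝ) + 1 := by positivity
  set ε : ℝ := (W - L) / (2 * ((n:ℝ) + 1)) with hεdef
  have hε : 0 < ε := div_pos (by linarith) (by positivity)
  set w' : Fin (n+1) → ℝ := fun i => w i + ε with hw'def
  have hw'pos : ∀ i, 0 < w' i := by
    intro i; have := hw i; simp only [hw'def]; linarith
  have hsum_w' : ∀ S : Finset (Fin (n+1)),
      ∑ i ∈ S, w' i = (∑ i ∈ S, w i) + (S.card : ℝ) * ε := by
    intro S
    simp [hw'def, Finset.sum_add_distrib, Finset.sum_const, nsmul_eq_mul]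
  have hcard : ∀ S : Finset (Fin (n+1)), (S.card : ℝ) ≤ (n:ℝ) + 1 := by
    intro S
    have h1 := Finset.card_le_univ S
    have h2 : S.card ≤ n + 1 := by simpa using h1
    exact_mod_cast h2
  have hεeq : ((n:ℝ) + 1) * ε = (W - L) / 2 := by
    rw [hεdef]; field_simp
  have hlose' : ∀ S : Finset (Fin (n+1)), v S = false → ∑ i ∈ S, w' i ≤ (L + W) / 2 := by
    intro S hS
    have h1 := hLle S hS
    have h2 : (S.card : ℝ) * ε ≤ ((n:ℝ) + 1) * ε :=
      mul_le_mul_of_nonneg_right (hcard S) hε.le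
    rw [hsum_w']
    rw [hεeq] at h2
    linarith
  have hwin' : ∀ S : Finset (Fin (n+1)), v S = true → W ≤ ∑ i ∈ S, w' i := by
    intro S hS
    have h1 := hWle S hS
    have h2 : (0:ℝ) ≤ (S.card : ℝ) * ε := by positivity
    rw [hsum_w']
    linarith
  set T : ℝ := ∑ i, w' i with hTdef
  have hT : 0 < T := Finset.sum_pos (fun i _ => hw'pos i) Finset.univ_nonempty
  set w'' : Fin (n+1) → ℝ := fun i => w' i / T with hw''def
  have hw''pos : ∀ i, 0 < w'' i := fun i => div_pos (hw'pos i) hT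
  have hsum_w'' : ∀ S : Finset (Fin (n+1)), ∑ i ∈ S, w'' i = (∑ i ∈ S, w' i) / T := by
    intro S; simp [hw''def, Finset.sum_div]
  have hsum1 : ∑ i, w'' i = 1 := by
    rw [hsum_w'']; exact div_self hT.ne'
  set A : ℝ := ((L + W) / 2) / T with hAdef
  set B : ℝ := W / T with hBdef
  have hA0 : 0 < A := div_pos (by linarith) hT
  have hAB : A < B := by
    rw [hAdef, hBdef]
    exact div_lt_div_of_pos_right (by linarith) hT
  have hloseA : ∀ S : Finset (Fin (n+1)), v S = false → ∑ i ∈ S, w'' i ≤ A := by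
    intro S hS
    rw [hsum_w'', hAdef]
    exact div_le_div_of_nonneg_right (hlose' S hS) hT.le
  have hwinB : ∀ S : Finset (Fin (n+1)), v S = true → B ≤ ∑ i ∈ S, w'' i := by
    intro S hS
    rw [hsum_w'', hBdef]
    exact div_le_div_of_nonneg_right (hwin' S hS) hT.le
  have hB1 : B ≤ 1 := by
    rw [hBdef, div_le_one hT]
    simpa [hTdef] using hwin' univ hfull
  set m : ℝ := univ.inf' Finset.univ_nonempty w'' with hmdef
  have hmle : ∀ i, m ≤ w'' i := fun i => Finset.inf'_le _ (Finset.mem_univ i)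
  have hm : 0 < m := by
    rw [hmdef, Finset.lt_inf'_iff]
    exact fun i _ => hw''pos i
  have hcpos : (0:ℝ) < 2*(n:ℝ)+2 := by positivity
  set α : ℝ := min (((B - A)/2) / (2*(n:ℝ)+2)) (m / (2*(n:ℝ)+2)) with hαdef
  have hα : 0 < α := lt_min (div_pos (by linarith) hcpos) (div_pos hm hcpos)
  have hαg : α * (2*(n:ℝ)+2) ≤ (B - A)/2 := by
    have h1 : α ≤ ((B - A)/2) / (2*(n:ℝ)+2) := min_le_left _ _
    exact (le_div_iff₀ hcpos).mp h1
  have hαm : α * (2*(n:ℝ)+2) ≤ m := by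
    have h1 : α ≤ m / (2*(n:ℝ)+2) := min_le_right _ _
    exact (le_div_iff₀ hcpos).mp h1
  have hnα : (0:ℝ) ≤ (n:ℝ) * α := by positivity
  set tw0 : Fin n → ℝ := fun i => w'' (Fin.castSucc i) with htw0def
  have htw0 : ∀ i, tw0 i = w'' (Fin.castSucc i) := fun _ => rfl
  refine ⟨(A+B)/2, tw0, α, by linarith, fun i => hw''pos _, hα, ?_⟩
  intro δ₀ δ hδ₀ hδ
  have hδ₀' := abs_le.mp hδ₀
  have hsumδ : |∑ i, δ i| ≤ (n:ℝ) * α := by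
    calc |∑ i, δ i| ≤ ∑ i, |δ i| := Finset.abs_sum_le_sum_abs _ _
      _ ≤ ∑ _i : Fin n, α := Finset.sum_le_sum (fun i _ => hδ i)
      _ = (n:ℝ) * α := by simp [mul_comm]
  set D : Fin (n+1) → ℝ := fun j => if h : (j:ℕ) < n then δ ⟨(j:ℕ), h⟩ else -∑ i, δ i
    with hDdef
  have htw_sum : ∑ i : Fin n, tw0 i = 1 - w'' (Fin.last n) := by
    have h1 := Fin.sum_univ_castSucc (f := w'')
    rw [hsum1] at h1
    simp only [htw0]
    linarith
  have hFeq : ∀ j : Fin (n+1),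
      (if h : (j:ℕ) < n then tw0 ⟨(j:ℕ), h⟩ + δ ⟨(j:ℕ), h⟩
        else 1 - ∑ i, (tw0 i + δ i)) = w'' j + D j := by
    intro j
    by_cases h : (j:ℕ) < n
    · have hc : Fin.castSucc (⟨(j:ℕ), h⟩ : Fin n) = j := Fin.ext rfl
      simp only [hDdef]
      rw [dif_pos h, dif_pos h, htw0, hc]
    · have hj : j = Fin.last n := Fin.ext (by have := j.isLt; simp [Fin.last]; omega)
      simp only [hDdef]
      rw [dif_neg h, dif_neg h, Finset.sum_add_distrib, htw_sum, hj]
      ring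
  have hDc : ∀ i : Fin n, D (Fin.castSucc i) = δ i := by
    intro i
    have h : ((Fin.castSucc i : Fin (n+1)) : ℕ) < n := by simpa using i.isLt
    simp only [hDdef]
    rw [dif_pos h]
    exact congrArg δ (Fin.ext (by simp))
  have hDlast : D (Fin.last n) = -∑ i, δ i := by
    simp only [hDdef]
    rw [dif_neg (by simp)]
  have hDabs : ∀ j, |D j| ≤ (n:ℝ) * α + α := by
    intro j
    by_cases h : (j:ℕ) < n
    · simp only [hDdef]
      rw [dif_pos h]
      have := hδ ⟨(j:ℕ), h⟩
      linarith
    · simp only [hDdef]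
      rw [dif_neg h, abs_neg]
      linarith [hsumδ, hα]
  have hDsum : ∀ S : Finset (Fin (n+1)), |∑ j ∈ S, D j| ≤ 2*(n:ℝ)*α := by
    intro S
    have h1 : |∑ j ∈ S, D j| ≤ ∑ j ∈ S, |D j| := Finset.abs_sum_le_sum_abs _ _
    have h2 : ∑ j ∈ S, |D j| ≤ ∑ j, |D j| :=
      Finset.sum_le_sum_of_subset_of_nonneg (Finset.subset_univ S)
        (fun _ _ _ => abs_nonneg _)
    have h3 : ∑ j, |D j| = (∑ i : Fin n, |D (Fin.castSucc i)|) + |D (Fin.last n)| :=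
      Fin.sum_univ_castSucc _
    have h4 : ∑ i : Fin n, |D (Fin.castSucc i)| ≤ (n:ℝ) * α := by
      calc ∑ i : Fin n, |D (Fin.castSucc i)| = ∑ i : Fin n, |δ i| := by
            simp only [hDc]
        _ ≤ ∑ _i : Fin n, α := Finset.sum_le_sum (fun i _ => hδ i)
        _ = (n:ℝ) * α := by simp [mul_comm]
    have h5 : |D (Fin.last n)| ≤ (n:ℝ) * α := by rw [hDlast, abs_neg]; exact hsumδ
    linarith
  have hFsum : ∀ S : Finset (Fin (n+1)),
      ∑ j ∈ S, (w'' j + D j) = (∑ j ∈ S, w'' j) + ∑ j ∈ S, D j :=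
    fun S => Finset.sum_add_distrib
  refine ⟨⟨by linarith, ?_, ?_⟩, ?_, by linarith⟩
  · intro i
    simp only [hFeq]
    have h1 := hmle i
    have h2 := hDabs i
    have h3 := abs_le.mp h2
    linarith
  · intro S
    simp only [hFeq]
    rw [hFsum S]
    cases hvS : v S with
    | true =>
      simp only [true_iff]
      have h1 := hwinB S hvS
      have h2 := (abs_le.mp (hDsum S)).1
      linarith
    | false =>
      simp only [Bool.false_eq_true, false_iff, not_le]
      have h1 := hloseA S hvS
      have h2 := (abs_le.mp (hDsum S)).2
      linarith
  · simp only [hFeq]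
    rw [hFsum univ]
    have h0 : ∑ j, D j = 0 := by
      rw [Fin.sum_univ_castSucc (f := D), hDlast]
      simp [hDc]
    rw [hsum1, h0, add_zero]
end

section
/- For the weighted majority game v = [3; 2,1,1,1], the coalition {2,3,4} is winning and the coalition {1} is losing, yet both have total weight 1/2 under the Shapley-Shubik vector (1/2, 1/6, 1/6, 1/6); hence no quota q can make this vector a representation of v. -/
open Finset

/-- The weighted majority game `[3; 2,1,1,1]` on four voters. -/
def gameV4 : Finset (Fin 4) → Bool :=
  fun S => decide (3 ≤ ∑ i ∈ S, (![2, 1, 1, 1] : Fin 4 → ℕ) i)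

/-- The Shapley-Shubik vector of `[3; 2,1,1,1]`. -/
noncomputable def ssw : Fin 4 → ℝ := ![1/2, 1/6, 1/6, 1/6]

/-- In `v = [3; 2,1,1,1]` the coalition `{2,3,4}` is winning and `{1}` is losing, yet
both have weight `1/2` under the Shapley-Shubik vector `(1/2, 1/6, 1/6, 1/6)`; hence no
quota makes this vector a representation of `v`. -/
theorem ssi_vector_not_feasible_for_gameV4 :
    gameV4 {1, 2, 3} = true ∧ gameV4 {0} = false ∧
      (∑ i ∈ ({1, 2, 3} : Finset (Fin 4)), ssw i) = 1 / 2 ∧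
      (∑ i ∈ ({0} : Finset (Fin 4)), ssw i) = 1 / 2 ∧
      ¬ ∃ q : ℝ, ∀ S : Finset (Fin 4), gameV4 S = true ↔ q ≤ ∑ i ∈ S, ssw i := by
  have h1 : gameV4 {1, 2, 3} = true := by decide
  have h2 : gameV4 {0} = false := by decide
  have h3 : (∑ i ∈ ({1, 2, 3} : Finset (Fin 4)), ssw i) = 1 / 2 := by
    simp [ssw, Finset.sum_insert, Finset.mem_insert]
    norm_num
  have h4 : (∑ i ∈ ({0} : Finset (Fin 4)), ssw i) = 1 / 2 := by
    simp [ssw]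
  refine ⟨h1, h2, h3, h4, ?_⟩
  rintro ⟨q, hq⟩
  have hw := (hq {1, 2, 3}).mp h1
  rw [h3] at hw
  have hl := (hq {0}).not.mp (by simp [h2])
  rw [h4] at hl
  exact hl hw
end

section
/- The weight polytope of every weighted majority game on n voters has positive (n−1)-dimensional volume. -/
open Finset

/-- `S` is a minimal winning coalition of `v`. -/
def MinWinning {n : ℕ} (v : Finset (Fin n) → Bool) (S : Finset (Fin n)) : Prop :=
  v S = true ∧ ∀ T : Finset (Fin n), T ⊂ S → v T = false

/-- `T` is a maximal losing coalition of `v`. -/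
def MaxLosing {n : ℕ} (v : Finset (Fin n) → Bool) (T : Finset (Fin n)) : Prop :=
  v T = false ∧ ∀ S : Finset (Fin n), T ⊂ S → v S = true

/-- The (normalized) weight polytope of `v`: nonnegative weights summing to one such
that every minimal winning coalition weighs at least as much as every maximal losing
coalition. -/
def weightPolytope {n : ℕ} (v : Finset (Fin n) → Bool) : Set (Fin n → ℝ) :=
  {w | (∀ i, 0 ≤ w i) ∧ (∑ i, w i) = 1 ∧
    ∀ S T : Finset (Fin n), MinWinning v S → MaxLosing v T →
      (∑ i ∈ T, w i) ≤ ∑ i ∈ S, w i}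

/-- Embedding of the first `n` coordinates into a full weight vector on `n+1` voters,
with the last weight `1 - Σ u i`. -/
def extendWeights {n : ℕ} (u : Fin n → ℝ) : Fin (n + 1) → ℝ :=
  fun j => if h : (j : ℕ) < n then u ⟨j, h⟩ else 1 - ∑ i, u i

lemma extend_sum {n : ℕ} (u : Fin n → ℝ) : ∑ j, extendWeights u j = 1 := by
  rw [Fin.sum_univ_castSucc]
  have h1 : ∀ i : Fin n, extendWeights u i.castSucc = u i := by
    intro i; simp [extendWeights, i.isLt]
  have h2 : extendWeights u (Fin.last n) = 1 - ∑ i, u i := by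
    simp [extendWeights]
  simp [h1, h2]

lemma extend_of_sum_one {n : ℕ} (x : Fin (n + 1) → ℝ) (hx : ∑ j, x j = 1) :
    extendWeights (fun i => x i.castSucc) = x := by
  funext j
  unfold extendWeights
  split
  · next h => exact congrArg x (Fin.ext rfl)
  · next h =>
    have hj : j = Fin.last n := Fin.ext (by have := j.isLt; simp; omega)
    rw [Fin.sum_univ_castSucc] at hx
    subst hj; linarith

lemma extend_coord_bound {n : ℕ} (u u' : Fin n → ℝ) (j : Fin (n + 1)) :
    |extendWeights u j - extendWeights u' j| ≤ (n + 1) * dist u u' := by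
  have hd : 0 ≤ dist u u' := dist_nonneg
  unfold extendWeights
  split
  · next h =>
    have := dist_le_pi_dist u u' ⟨j, h⟩
    rw [Real.dist_eq] at this
    nlinarith
  · next h =>
    have h1 : |(1 - ∑ i, u i) - (1 - ∑ i, u' i)| = |∑ i, (u' i - u i)| := by
      rw [Finset.sum_sub_distrib]; congr 1; ring
    rw [h1]
    calc |∑ i, (u' i - u i)| ≤ ∑ i : Fin n, |u' i - u i| := Finset.abs_sum_le_sum_abs _ _
      _ ≤ ∑ _i : Fin n, dist u u' := by
          apply Finset.sum_le_sum; intro i _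
          have := dist_le_pi_dist u' u i
          rw [Real.dist_eq] at this
          rwa [dist_comm u' u] at this
      _ = n * dist u u' := by simp [Finset.sum_const, mul_comm]
      _ ≤ (n + 1) * dist u u' := by nlinarith

lemma extend_sum_bound {n : ℕ} (u u' : Fin n → ℝ) (S : Finset (Fin (n + 1))) :
    |∑ j ∈ S, extendWeights u j - ∑ j ∈ S, extendWeights u' j|
      ≤ (n + 1) * ((n + 1) * dist u u') := by
  rw [← Finset.sum_sub_distrib]
  calc |∑ j ∈ S, (extendWeights u j - extendWeights u' j)|
      ≤ ∑ j ∈ S, |extendWeights u j - extendWeights u' j| := Finset.abs_sum_le_sum_abs _ _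
    _ ≤ ∑ _j ∈ S, (n + 1) * dist u u' := by
        apply Finset.sum_le_sum; intro j _; exact extend_coord_bound u u' j
    _ = S.card * ((n + 1) * dist u u') := by simp [Finset.sum_const, mul_comm]
    _ ≤ (n + 1) * ((n + 1) * dist u u') := by
        have h1 : (S.card : ℝ) ≤ (n + 1) := by
          have := Finset.card_le_univ S
          simp at this
          exact_mod_cast this.trans (by simp)
        have hd : 0 ≤ (n + 1 : ℝ) * dist u u' := by positivity
        nlinarith

/-- Projection of the weight polytope onto the first `n` coordinates (eliminating the
last weight). -/
def projWeightPolytope {n : ℕ} (v : Finset (Fin (n + 1)) → Bool) : Set (Fin n → ℝ) :=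
  {u | extendWeights u ∈ weightPolytope v}


set_option maxHeartbeats 2000000 in
open MeasureTheory in
/-- The weight polytope of every weighted majority game on `n+1` voters has positive
`n`-dimensional volume (Lebesgue measure of its projection onto the first `n`
coordinates). -/
theorem weightPolytope_pos_volume (n : ℕ) (v : Finset (Fin (n + 1)) → Bool)
    (hv : IsWMG v) : 0 < volume (projWeightPolytope v) := by
  obtain ⟨⟨hv0, hv1, hmono⟩, q, w, hq, hw, hiff⟩ := hv
  set W := ∑ i, w i with hWdef
  have hqW : q ≤ W := (hiff Finset.univ).mp hv1
  have hW : 0 < W := lt_of_lt_of_le hq hqW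
  set wb : Fin (n+1) → ℝ := fun i => w i / W with hwb
  have hwb_nonneg : ∀ i, 0 ≤ wb i := fun i => div_nonneg (hw i) hW.le
  have hwb_sum : ∑ i, wb i = 1 := by
    rw [hwb, ← Finset.sum_div, ← hWdef, div_self hW.ne']
  set a : ℝ := q / W with ha
  have ha_pos : 0 < a := div_pos hq hW
  have ha_le : a ≤ 1 := by rw [ha, div_le_one hW]; exact hqW
  have hwin : ∀ S, v S = true → a ≤ ∑ i ∈ S, wb i := by
    intro S hS
    have h := (hiff S).mp hS
    rw [hwb, ← Finset.sum_div, ha]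
    gcongr
  have hlose : ∀ T, v T = false → ∑ i ∈ T, wb i < a := by
    intro T hT
    have h : ¬ (q ≤ ∑ i ∈ T, w i) := by
      intro hle
      rw [← hiff T] at hle; rw [hT] at hle; exact Bool.false_ne_true hle
    push_neg at h
    rw [hwb, ← Finset.sum_div, ha]
    exact div_lt_div_of_pos_right h hW
  set L : Finset (Finset (Fin (n+1))) := Finset.univ.filter (fun T => v T = false) with hL
  have hLne : L.Nonempty := ⟨∅, by simp [hL, hv0]⟩
  set M : ℝ := L.sup' hLne (fun T => ∑ i ∈ T, wb i) with hM
  have hM_lt : M < a := by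
    rw [hM, Finset.sup'_lt_iff hLne]
    intro T hT
    exact hlose T (by simpa [hL] using hT)
  have hM0 : 0 ≤ M := by
    have hmem : (∅ : Finset (Fin (n+1))) ∈ L := by simp [hL, hv0]
    have := Finset.le_sup' (f := fun T => ∑ i ∈ T, wb i) hmem
    simpa only [Finset.sum_empty, ← hM] using this
  have hMle : ∀ T, v T = false → ∑ i ∈ T, wb i ≤ M := by
    intro T hT
    exact Finset.le_sup' (f := fun T => ∑ i ∈ T, wb i) (by simp [hL, hT])
  set δ : ℝ := a - M with hδdef
  have hδ : 0 < δ := by simp [hδdef]; linarith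
  have hδ1 : δ ≤ 1 := by rw [hδdef]; linarith
  set ε : ℝ := δ / 4 with hε
  have hε_pos : 0 < ε := by positivity
  have hε_lt : ε < 1 := by rw [hε]; linarith
  set m : ℝ := ε / (n+1) with hmdef
  have hm : 0 < m := by positivity
  set we : Fin (n+1) → ℝ := fun i => (1-ε) * wb i + m with hwe
  have hwe_ge : ∀ i, m ≤ we i := by
    intro i
    have h1 := hwb_nonneg i
    simp only [hwe]
    nlinarith
  have hnm : ((n:ℝ)+1) * m = ε := by
    rw [hmdef]; field_simp
  have hwe_sumS : ∀ S : Finset (Fin (n+1)),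
      ∑ i ∈ S, we i = (1-ε) * (∑ i ∈ S, wb i) + S.card * m := by
    intro S
    simp only [hwe]
    rw [Finset.sum_add_distrib, ← Finset.mul_sum, Finset.sum_const, nsmul_eq_mul]
  have hwe_sum : ∑ i, we i = 1 := by
    rw [hwe_sumS Finset.univ, hwb_sum]
    simp only [Finset.card_univ, Fintype.card_fin]
    push_cast
    rw [hnm]  -- might not apply; fallback below
    ring
  have hcard : ∀ S : Finset (Fin (n+1)), (S.card : ℝ) ≤ (n:ℝ)+1 := by
    intro S
    have := Finset.card_le_univ S
    have h2 : S.card ≤ n + 1 := by simpa using this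
    exact_mod_cast h2
  have hwinA : ∀ S, v S = true → (1-ε)*a ≤ ∑ i ∈ S, we i := by
    intro S hS
    rw [hwe_sumS]
    have h1 := hwin S hS
    have h2 : (0:ℝ) ≤ S.card * m := mul_nonneg (Nat.cast_nonneg _) hm.le
    have h3 : (1-ε)*a ≤ (1-ε)*(∑ i ∈ S, wb i) :=
      mul_le_mul_of_nonneg_left h1 (by linarith)
    linarith
  have hloseB : ∀ T, v T = false → ∑ i ∈ T, we i ≤ (1-ε)*M + ε := by
    intro T hT
    rw [hwe_sumS]
    have h1 := hMle T hT
    have h2 : (T.card : ℝ) * m ≤ ε := by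
      rw [← hnm]
      have := hcard T
      exact mul_le_mul_of_nonneg_right this hm.le
    have h3 : (1-ε)*(∑ i ∈ T, wb i) ≤ (1-ε)*M :=
      mul_le_mul_of_nonneg_left h1 (by linarith)
    linarith
  have hgap : (1-ε)*M + ε + δ/2 ≤ (1-ε)*a := by
    have : a - M = δ := by rw [hδdef]
    nlinarith
  set u₀ : Fin n → ℝ := fun i => we i.castSucc with hu₀
  have hext : extendWeights u₀ = we := extend_of_sum_one we hwe_sum
  set c : ℝ := min m (δ/2) / 4 with hcdef
  have hc_pos : 0 < c := by
    rw [hcdef]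
    have := lt_min hm (by linarith : (0:ℝ) < δ/2)
    linarith
  set r : ℝ := c / ((n+1)^2) with hrdef
  have hr : 0 < r := by positivity
  have hcm : c < m := by
    rw [hcdef]
    have := min_le_left m (δ/2)
    linarith
  have hcδ : 2*c ≤ δ/2 := by
    rw [hcdef]
    have := min_le_right m (δ/2)
    linarith
  have hball : Metric.ball u₀ r ⊆ projWeightPolytope v := by
    intro u hu
    have hd : dist u u₀ < r := by simpa [Metric.mem_ball] using hu
    have hd0 : 0 ≤ dist u u₀ := dist_nonneg
    have hcle : (n+1 : ℝ) * ((n+1) * dist u u₀) ≤ c := by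
      have h1 : ((n:ℝ)+1)^2 * dist u u₀ ≤ ((n:ℝ)+1)^2 * r := by nlinarith
      have h2 : ((n:ℝ)+1)^2 * r = c := by
        rw [hrdef]; field_simp
      nlinarith
    have hsumb : ∀ S : Finset (Fin (n+1)),
        |∑ j ∈ S, extendWeights u j - ∑ j ∈ S, we j| ≤ c := by
      intro S
      have h := extend_sum_bound u u₀ S
      rw [hext] at h
      push_cast at h hcle
      linarith
    have hcoordb : ∀ j, |extendWeights u j - we j| ≤ c := by
      intro j
      have h := extend_coord_bound u u₀ j
      rw [hext] at h
      have h2 : ((n:ℝ)+1) * dist u u₀ ≤ ((n:ℝ)+1) * (((n:ℝ)+1)*dist u u₀) :=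
        le_mul_of_one_le_left (mul_nonneg (by positivity) hd0) (by push_cast; linarith)
      push_cast at h
      linarith [hcle]
    simp only [projWeightPolytope, weightPolytope, Set.mem_setOf_eq]
    refine ⟨?_, extend_sum u, ?_⟩
    · intro j
      have h1 := (abs_le.mp (hcoordb j)).1
      have h2 := hwe_ge j
      linarith
    · intro S T hS hT
      have hSw := hwinA S hS.1
      have hTl := hloseB T hT.1
      have h1 := abs_le.mp (hsumb S)
      have h2 := abs_le.mp (hsumb T)
      linarith [hgap, hcδ, h1.1, h1.2, h2.1, h2.2]
  exact lt_of_lt_of_le (Metric.measure_ball_pos _ u₀ hr) (measure_mono hball)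
end

section
/- The average weight index does not satisfy the dummy property: in the weighted majority game [1; 1, 0] on two voters, voter 2 is a dummy but receives average weight index 1/4 > 0 (the average weight index of this game is (3/4, 1/4)). -/
open Finset

open MeasureTheory in
/-- The average weight index of `v`: the centroid of the weight polytope, computed via
its full-dimensional projection. -/
noncomputable def avgWeightIndex {n : ℕ} (v : Finset (Fin (n + 1)) → Bool)
    (i : Fin (n + 1)) : ℝ :=
  (∫ u in projWeightPolytope v, extendWeights u i) /
    (volume (projWeightPolytope v)).toReal

/-- The weighted majority game `[1; 1, 0]` on two voters. -/
def gameOneZero : Finset (Fin 2) → Bool :=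
  fun S => decide (1 ≤ ∑ i ∈ S, (![1, 0] : Fin 2 → ℕ) i)


open MeasureTheory intervalIntegral in
private lemma proj_eq : projWeightPolytope gameOneZero
    = (MeasurableEquiv.funUnique (Fin 1) ℝ) ⁻¹' Set.Icc (1/2:ℝ) 1 := by
  have hmin : MinWinning gameOneZero {0} := by unfold MinWinning; decide
  have hmax : MaxLosing gameOneZero {1} := by unfold MaxLosing; decide
  have hminc : ∀ S, MinWinning gameOneZero S → S = {0} := by unfold MinWinning; decide
  have hmaxc : ∀ T, MaxLosing gameOneZero T → T = {1} := by unfold MaxLosing; decide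
  ext u
  have hw0 : extendWeights u 0 = u 0 := rfl
  have hw1 : extendWeights u 1 = 1 - u 0 := by simp [extendWeights]
  constructor
  · rintro ⟨hpos, -, hle⟩
    have h1 := hpos 1
    rw [hw1] at h1
    have h2 := hle {0} {1} hmin hmax
    rw [Finset.sum_singleton, Finset.sum_singleton, hw0, hw1] at h2
    show u 0 ∈ Set.Icc (1/2:ℝ) 1
    constructor <;> linarith
  · intro hu
    obtain ⟨h1, h2⟩ : (1:ℝ)/2 ≤ u 0 ∧ u 0 ≤ 1 := hu
    refine ⟨?_, ?_, ?_⟩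
    · intro i
      fin_cases i
      · show (0:ℝ) ≤ extendWeights u 0
        rw [hw0]; linarith
      · show (0:ℝ) ≤ extendWeights u 1
        rw [hw1]; linarith
    · rw [Fin.sum_univ_two, hw0, hw1]; ring
    · intro S T hS hT
      rw [hminc S hS, hmaxc T hT, Finset.sum_singleton, Finset.sum_singleton, hw0, hw1]
      linarith

open MeasureTheory intervalIntegral in
/-- The average weight index violates the dummy property: in `[1; 1, 0]` voter `2` is a
dummy, yet the average weight index is `(3/4, 1/4)`, giving the dummy positive power. -/
theorem avgWeightIndex_fails_dummy_property :
    IsDummy gameOneZero 1 ∧ avgWeightIndex gameOneZero 0 = 3 / 4 ∧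
      avgWeightIndex gameOneZero 1 = 1 / 4 ∧ 0 < avgWeightIndex gameOneZero 1 := by
  have hmp : MeasurePreserving (MeasurableEquiv.funUnique (Fin 1) ℝ) volume volume :=
    volume_preserving_funUnique (Fin 1) ℝ
  have hemb := (MeasurableEquiv.funUnique (Fin 1) ℝ).measurableEmbedding
  have hvol : (volume (projWeightPolytope gameOneZero)).toReal = 1/2 := by
    rw [proj_eq, hmp.measure_preimage measurableSet_Icc.nullMeasurableSet, Real.volume_Icc]
    rw [ENNReal.toReal_ofReal (by norm_num)]; norm_num
  have hint0 : ∫ u in projWeightPolytope gameOneZero, extendWeights u 0 = 3/8 := by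
    rw [proj_eq]
    have hfun : (fun u : Fin 1 → ℝ => extendWeights u 0)
        = fun u => (fun x : ℝ => x) ((MeasurableEquiv.funUnique (Fin 1) ℝ) u) := rfl
    rw [hfun, hmp.setIntegral_preimage_emb hemb (fun x : ℝ => x) (Set.Icc (1/2:ℝ) 1)]
    rw [MeasureTheory.integral_Icc_eq_integral_Ioc, ← integral_of_le (by norm_num)]
    simp [integral_id]; norm_num
  have hint1 : ∫ u in projWeightPolytope gameOneZero, extendWeights u 1 = 1/8 := by
    rw [proj_eq]
    have hfun : (fun u : Fin 1 → ℝ => extendWeights u 1)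
        = fun u => (fun x : ℝ => 1 - x) ((MeasurableEquiv.funUnique (Fin 1) ℝ) u) := by
      funext u
      show extendWeights u 1 = 1 - u 0
      simp [extendWeights]
    rw [hfun, hmp.setIntegral_preimage_emb hemb (fun x : ℝ => 1 - x) (Set.Icc (1/2:ℝ) 1)]
    rw [MeasureTheory.integral_Icc_eq_integral_Ioc, ← integral_of_le (by norm_num)]
    rw [integral_sub intervalIntegrable_const intervalIntegrable_id]
    simp [integral_id]; norm_num
  have hd : IsDummy gameOneZero 1 := by unfold IsDummy; decide
  have h0 : avgWeightIndex gameOneZero 0 = 3/4 := by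
    unfold avgWeightIndex; rw [hint0, hvol]; norm_num
  have h1 : avgWeightIndex gameOneZero 1 = 1/4 := by
    unfold avgWeightIndex; rw [hint1, hvol]; norm_num
  exact ⟨hd, h0, h1, by rw [h1]; norm_num⟩
end

section
/- A weighted majority game and its dual game have the same weight polytope, and hence the same average weight index. -/
open Finset

/-- The dual game `v*`, with `v*(S) = 1 - v(N \ S)`. -/
def dualGame {n : ℕ} (v : Finset (Fin n) → Bool) : Finset (Fin n) → Bool :=
  fun S => !v Sᶜ


lemma minWin_dual_iff {n : ℕ} (v : Finset (Fin n) → Bool) (S : Finset (Fin n)) :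
    MinWinning (dualGame v) S ↔ MaxLosing v Sᶜ := by
  constructor
  · rintro ⟨h1, h2⟩
    refine ⟨by simpa [dualGame] using h1, fun U hU => ?_⟩
    have := h2 Uᶜ (by simpa using (by simpa using compl_lt_compl_iff_lt.mpr hU : Uᶜ < Sᶜᶜ))
    simpa [dualGame] using this
  · rintro ⟨h1, h2⟩
    refine ⟨by simpa [dualGame] using h1, fun T hT => ?_⟩
    have := h2 Tᶜ (compl_lt_compl_iff_lt.mpr hT)
    simpa [dualGame] using this

lemma maxLos_dual_iff {n : ℕ} (v : Finset (Fin n) → Bool) (T : Finset (Fin n)) :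
    MaxLosing (dualGame v) T ↔ MinWinning v Tᶜ := by
  constructor
  · rintro ⟨h1, h2⟩
    refine ⟨by simpa [dualGame] using h1, fun U hU => ?_⟩
    have := h2 Uᶜ (by simpa using (by simpa using compl_lt_compl_iff_lt.mpr hU : Tᶜᶜ < Uᶜ))
    simpa [dualGame] using this
  · rintro ⟨h1, h2⟩
    refine ⟨by simpa [dualGame] using h1, fun S hS => ?_⟩
    have := h2 Sᶜ (compl_lt_compl_iff_lt.mpr hS)
    simpa [dualGame] using this

lemma sum_compl_eq {n : ℕ} (w : Fin n → ℝ) (h : (∑ i, w i) = 1) (S : Finset (Fin n)) :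
    ∑ i ∈ Sᶜ, w i = 1 - ∑ i ∈ S, w i := by
  have := Finset.sum_add_sum_compl S w
  linarith

lemma polytope_subset_dual {n : ℕ} (v : Finset (Fin n) → Bool) :
    weightPolytope v ⊆ weightPolytope (dualGame v) := by
  rintro w ⟨h0, h1, h2⟩
  refine ⟨h0, h1, fun S T hS hT => ?_⟩
  have hS' := (minWin_dual_iff v S).mp hS
  have hT' := (maxLos_dual_iff v T).mp hT
  have := h2 Tᶜ Sᶜ hT' hS'
  rw [sum_compl_eq w h1, sum_compl_eq w h1] at this
  linarith

lemma dual_dual {n : ℕ} (v : Finset (Fin n) → Bool) : dualGame (dualGame v) = v := by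
  funext S; simp [dualGame]

/-- A weighted majority game and its dual have the same weight polytope, and hence the
same average weight index. -/
theorem dualGame_same_weightPolytope_and_avgWeightIndex (n : ℕ)
    (v : Finset (Fin (n + 1)) → Bool) (hv : IsWMG v) :
    weightPolytope (dualGame v) = weightPolytope v ∧
      ∀ i : Fin (n + 1), avgWeightIndex (dualGame v) i = avgWeightIndex v i := by
  have h : weightPolytope (dualGame v) = weightPolytope v := by
    apply Set.Subset.antisymm
    · have := polytope_subset_dual (dualGame v)
      rwa [dual_dual] at this
    · exact polytope_subset_dual v
  exact ⟨h, fun i => by simp [avgWeightIndex, projWeightPolytope, h]⟩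
end
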